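/- arXiv:1609.00318 — 4 statements merged into one kernel-verified Lean document; each statement's English description precedes it below -/
import Mathlib

section
/- Let $B \in \mathbb{R}^{n\times n}$ be symmetric positive definite, $G \in \mathbb{R}^{n\times n}$ symmetric, and $D \in \mathbb{R}^{n\times q}$ such that $D^T G D$ is positive definite. Then the matrix $B^+ = B - BD(D^TBD)^{-1}D^TB + GD(D^TGD)^{-1}D^TG$ is symmetric positive definite. -/
open Matrix

theorem stmt_0 {n q : ℕ} (B G : Matrix (Fin n) (Fin n) ℝ)
    (D : Matrix (Fin n) (Fin q) ℝ)
    (hB : B.PosDef) (hG : G.IsSymm)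
    (hDGD : (Dᵀ * G * D).PosDef) :
    (B - B * D * (Dᵀ * B * D)⁻¹ * Dᵀ * B + G * D * (Dᵀ * G * D)⁻¹ * Dᵀ * G).PosDef := by
  have hBsymm : Bᵀ = B := hB.isHermitian
  -- D has trivial kernel
  have hDker : ∀ v : Fin q → ℝ, D *ᵥ v = 0 → v = 0 := by
    intro v hv
    by_contra h
    have h2 := hDGD.dotProduct_mulVec_pos h
    rw [show (Dᵀ * G * D) *ᵥ v = Dᵀ *ᵥ (G *ᵥ (D *ᵥ v)) by
      simp [← mulVec_mulVec], hv] at h2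
    simp at h2
  -- DᵀBD is PosDef
  have hK : (Dᵀ * B * D).PosDef := by
    refine posDef_iff_dotProduct_mulVec.mpr ⟨?_, ?_⟩
    · show _ᴴ = _
      rw [conjTranspose_eq_transpose_of_trivial]
      simp [Matrix.transpose_mul, Matrix.mul_assoc, hBsymm]
    · intro v hv
      have hDv : D *ᵥ v ≠ 0 := fun h => hv (hDker v h)
      have := hB.dotProduct_mulVec_pos hDv
      simpa [← mulVec_mulVec, dotProduct_mulVec, vecMul_transpose] using this
  set K := Dᵀ * B * D with hKdef
  set M := Dᵀ * G * D with hMdef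
  have hKinv : K * K⁻¹ = 1 := Matrix.mul_nonsing_inv _ ((Matrix.isUnit_iff_isUnit_det _).1 hK.isUnit)
  have hKsymm : Kᵀ = K := hK.isHermitian
  have hMsymm : Mᵀ = M := hDGD.isHermitian
  have hKinvsymm : (K⁻¹)ᵀ = K⁻¹ := by
    rw [Matrix.transpose_nonsing_inv, hKsymm]
  have hMinvsymm : (M⁻¹)ᵀ = M⁻¹ := by
    rw [Matrix.transpose_nonsing_inv, hMsymm]
  set E : Matrix (Fin n) (Fin n) ℝ := 1 - D * K⁻¹ * Dᵀ * B with hEdef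
  -- key matrix identity
  have key : B - B * D * K⁻¹ * Dᵀ * B = Eᵀ * B * E := by
    have h1 : Eᵀ = 1 - B * D * K⁻¹ * Dᵀ := by
      simp [hEdef, Matrix.transpose_mul, hBsymm, hKinvsymm, Matrix.mul_assoc]
    rw [h1, hEdef]
    symm
    have h2 : B * D * K⁻¹ * (Dᵀ * B * D) * K⁻¹ * Dᵀ * B = B * D * K⁻¹ * Dᵀ * B := by
      calc B * D * K⁻¹ * (Dᵀ * B * D) * K⁻¹ * Dᵀ * B
          = B * D * (K⁻¹ * ((Dᵀ * B * D) * K⁻¹)) * Dᵀ * B := by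
            simp only [Matrix.mul_assoc]
        _ = B * D * K⁻¹ * Dᵀ * B := by
            rw [← hKdef]
            have : K⁻¹ * (K * K⁻¹) = K⁻¹ := by rw [hKinv, Matrix.mul_one]
            rw [this]
    calc (1 - B * D * K⁻¹ * Dᵀ) * B * (1 - D * K⁻¹ * Dᵀ * B)
        = B - B * D * K⁻¹ * Dᵀ * B - B * D * K⁻¹ * Dᵀ * B
          + B * D * K⁻¹ * (Dᵀ * B * D) * K⁻¹ * Dᵀ * B := by
          simp only [Matrix.sub_mul, Matrix.mul_sub, Matrix.one_mul, Matrix.mul_one,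
            Matrix.mul_assoc]
          abel
      _ = B - B * D * K⁻¹ * Dᵀ * B := by rw [h2]; abel
  -- symmetry of the whole thing
  have hsym : (B - B * D * K⁻¹ * Dᵀ * B + G * D * M⁻¹ * Dᵀ * G).IsHermitian := by
    have hGsymm : Gᵀ = G := hG
    show _ᴴ = _
    rw [conjTranspose_eq_transpose_of_trivial]
    simp [Matrix.transpose_mul, hBsymm, hGsymm, hKinvsymm, hMinvsymm, Matrix.mul_assoc]
  refine posDef_iff_dotProduct_mulVec.mpr ⟨hsym, fun z hz => ?_⟩
  -- quadratic form computation
  have hMinvPD : (M⁻¹).PosDef := hDGD.inv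
  have expand : ∀ x : Fin n → ℝ,
      x ⬝ᵥ ((B - B * D * K⁻¹ * Dᵀ * B + G * D * M⁻¹ * Dᵀ * G) *ᵥ x)
      = (E *ᵥ x) ⬝ᵥ (B *ᵥ (E *ᵥ x)) + (Dᵀ *ᵥ (G *ᵥ x)) ⬝ᵥ (M⁻¹ *ᵥ (Dᵀ *ᵥ (G *ᵥ x))) := by
    intro x
    have hGsymm : Gᵀ = G := hG
    have e1 : x ⬝ᵥ ((Eᵀ * B * E) *ᵥ x) = (E *ᵥ x) ⬝ᵥ (B *ᵥ (E *ᵥ x)) := by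
      rw [← mulVec_mulVec, ← mulVec_mulVec, dotProduct_mulVec, vecMul_transpose]
    have e2 : x ⬝ᵥ ((G * D * M⁻¹ * Dᵀ * G) *ᵥ x)
        = (Dᵀ *ᵥ (G *ᵥ x)) ⬝ᵥ (M⁻¹ *ᵥ (Dᵀ *ᵥ (G *ᵥ x))) := by
      have : G * D * M⁻¹ * Dᵀ * G = (Dᵀ * G)ᵀ * M⁻¹ * (Dᵀ * G) := by
        simp [Matrix.transpose_mul, hGsymm, Matrix.mul_assoc]
      rw [this]
      rw [show ((Dᵀ * G)ᵀ * M⁻¹ * (Dᵀ * G)) *ᵥ x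
          = (Dᵀ * G)ᵀ *ᵥ (M⁻¹ *ᵥ ((Dᵀ * G) *ᵥ x)) by simp [← mulVec_mulVec]]
      rw [dotProduct_mulVec, vecMul_transpose, ← mulVec_mulVec]
    calc x ⬝ᵥ ((B - B * D * K⁻¹ * Dᵀ * B + G * D * M⁻¹ * Dᵀ * G) *ᵥ x)
        = x ⬝ᵥ ((Eᵀ * B * E) *ᵥ x) + x ⬝ᵥ ((G * D * M⁻¹ * Dᵀ * G) *ᵥ x) := by
          rw [key]
          simp [Matrix.add_mulVec, dotProduct_add]
      _ = _ := by rw [e1, e2]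
  rw [show (star z : Fin n → ℝ) = z by simp, expand z]
  -- both terms nonneg
  have hterm2 : 0 ≤ (Dᵀ *ᵥ (G *ᵥ z)) ⬝ᵥ (M⁻¹ *ᵥ (Dᵀ *ᵥ (G *ᵥ z))) := by
    have := hMinvPD.posSemidef.dotProduct_mulVec_nonneg (Dᵀ *ᵥ (G *ᵥ z))
    simpa using this
  have hterm1 : 0 ≤ (E *ᵥ z) ⬝ᵥ (B *ᵥ (E *ᵥ z)) := by
    have := hB.posSemidef.dotProduct_mulVec_nonneg (E *ᵥ z)
    simpa using this
  by_cases hEz : E *ᵥ z = 0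
  · -- then z = D w with w ≠ 0, second term positive
    set w : Fin q → ℝ := K⁻¹ *ᵥ (Dᵀ *ᵥ (B *ᵥ z)) with hwdef
    have hzDw : z = D *ᵥ w := by
      have : E *ᵥ z = z - D *ᵥ w := by
        simp [hEdef, Matrix.sub_mulVec, ← mulVec_mulVec, hwdef]
      rw [this] at hEz
      linear_combination (norm := module) hEz
    have hw : w ≠ 0 := by
      intro h
      apply hz
      rw [hzDw, h, mulVec_zero]
    have hDGz : Dᵀ *ᵥ (G *ᵥ z) = M *ᵥ w := by
      rw [hzDw]; simp [hMdef, ← mulVec_mulVec]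
    have hMw : M *ᵥ w ≠ 0 := by
      intro h
      have h2 := hDGD.dotProduct_mulVec_pos hw
      rw [h] at h2
      simp at h2
    have : 0 < (Dᵀ *ᵥ (G *ᵥ z)) ⬝ᵥ (M⁻¹ *ᵥ (Dᵀ *ᵥ (G *ᵥ z))) := by
      have := hMinvPD.dotProduct_mulVec_pos hMw
      rw [hDGz]
      simpa using this
    linarith
  · have : 0 < (E *ᵥ z) ⬝ᵥ (B *ᵥ (E *ᵥ z)) := by
      have := hB.dotProduct_mulVec_pos hEz
      simpa using this
    linarith
end

section
/- Let $B \in \mathbb{R}^{n\times n}$ be symmetric positive definite, $G \in \mathbb{R}^{n\times n}$ symmetric, and $D \in \mathbb{R}^{n\times q}$ with $D^TGD$ positive definite. Define $B^+ = B - BD(D^TBD)^{-1}D^TB + GD(D^TGD)^{-1}D^TG$. Then $\det(B^+) = \det(B) \cdot \det(D^TGD)/\det(D^TBD)$. -/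
open Matrix

theorem stmt_1 {n q : ℕ} (B G : Matrix (Fin n) (Fin n) ℝ)
    (D : Matrix (Fin n) (Fin q) ℝ)
    (hB : B.PosDef) (hG : G.IsSymm)
    (hDGD : (Dᵀ * G * D).PosDef) :
    (B - B * D * (Dᵀ * B * D)⁻¹ * Dᵀ * B + G * D * (Dᵀ * G * D)⁻¹ * Dᵀ * G).det
      = B.det * (Dᵀ * G * D).det / (Dᵀ * B * D).det := by
  -- `D` has trivial kernel, since `Dᵀ * G * D` is positive definite
  have hDvec : ∀ x : Fin q → ℝ, x ≠ 0 → D *ᵥ x ≠ 0 := by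
    intro x hx hcon
    have h := hDGD.dotProduct_mulVec_pos hx
    simp only [← mulVec_mulVec, hcon, mulVec_zero, dotProduct_zero] at h
    exact lt_irrefl 0 h
  -- hence `Dᵀ * B * D` is positive definite
  have hDBD : (Dᵀ * B * D).PosDef := by
    refine posDef_iff_dotProduct_mulVec.mpr ⟨?_, ?_⟩
    · have hBh : Bᴴ = B := hB.isHermitian
      rw [Matrix.IsHermitian]
      rw [conjTranspose_eq_transpose_of_trivial] at hBh ⊢
      rw [transpose_mul, transpose_mul, transpose_transpose, hBh, Matrix.mul_assoc]
    · intro x hx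
      have h := hB.dotProduct_mulVec_pos (hDvec x hx)
      simpa only [← mulVec_mulVec, star_trivial, dotProduct_mulVec, vecMul_transpose] using h
  set A := Dᵀ * B * D with hAdef
  set E := Dᵀ * G * D with hEdef
  have hBdet : B.det ≠ 0 := ne_of_gt hB.det_pos
  have hAdet : A.det ≠ 0 := ne_of_gt hDBD.det_pos
  have hEdet : E.det ≠ 0 := ne_of_gt hDGD.det_pos
  have hBB : B * B⁻¹ = 1 := mul_nonsing_inv _ (isUnit_iff_ne_zero.mpr hBdet)
  have hBB' : B⁻¹ * B = 1 := nonsing_inv_mul _ (isUnit_iff_ne_zero.mpr hBdet)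
  have hAA : A⁻¹ * A = 1 := nonsing_inv_mul _ (isUnit_iff_ne_zero.mpr hAdet)
  have hEE : E⁻¹ * E = 1 := nonsing_inv_mul _ (isUnit_iff_ne_zero.mpr hEdet)
  set X := A⁻¹ * E with hXdef
  set Y := E⁻¹ * (Dᵀ * G) * (B⁻¹ * (G * D)) with hYdef
  set U := fromCols (B * D) (G * D) with hUdef
  set V := fromRows (-(A⁻¹ * (Dᵀ * B))) (E⁻¹ * (Dᵀ * G)) with hVdef
  have step1 : B - B * D * A⁻¹ * Dᵀ * B + G * D * E⁻¹ * Dᵀ * G = B + U * V := by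
    rw [hUdef, hVdef, fromCols_mul_fromRows]
    simp only [Matrix.mul_neg, Matrix.mul_assoc]
    abel
  have step2 : B + U * V = B * (1 + B⁻¹ * (U * V)) := by
    rw [Matrix.mul_add, Matrix.mul_one, ← Matrix.mul_assoc, hBB, Matrix.one_mul]
  have hc1 : B⁻¹ * (B * D) = D := by rw [← Matrix.mul_assoc, hBB', Matrix.one_mul]
  have step4 : V * (B⁻¹ * U) = fromBlocks (-1) (-X) 1 Y := by
    rw [hUdef, hVdef, mul_fromCols, hc1, fromRows_mul_fromCols]
    have e11 : -(A⁻¹ * (Dᵀ * B)) * D = -1 := by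
      rw [Matrix.neg_mul, Matrix.mul_assoc, ← hAdef, hAA]
    have e12 : -(A⁻¹ * (Dᵀ * B)) * (B⁻¹ * (G * D)) = -X := by
      rw [Matrix.neg_mul, hXdef]
      congr 1
      rw [Matrix.mul_assoc, Matrix.mul_assoc]
      congr 1
      rw [← Matrix.mul_assoc B B⁻¹, hBB, Matrix.one_mul, hEdef, ← Matrix.mul_assoc]
    have e21 : E⁻¹ * (Dᵀ * G) * D = 1 := by
      rw [Matrix.mul_assoc, ← hEdef, hEE]
    rw [e11, e12, e21]
  have step5 : (1 : Matrix (Fin q ⊕ Fin q) (Fin q ⊕ Fin q) ℝ) + fromBlocks (-1) (-X) 1 Y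
      = fromBlocks 0 (-X) 1 (1 + Y) := by
    rw [← fromBlocks_one, fromBlocks_add]
    simp
  have hmul : fromBlocks (1 : Matrix (Fin q) (Fin q) ℝ) (1 : Matrix (Fin q) (Fin q) ℝ)
        (0 : Matrix (Fin q) (Fin q) ℝ) (1 : Matrix (Fin q) (Fin q) ℝ)
        * fromBlocks (0 : Matrix (Fin q) (Fin q) ℝ) (-X) (1 : Matrix (Fin q) (Fin q) ℝ) (1 + Y)
      = fromBlocks 1 (-X + (1 + Y)) 1 (1 + Y) := by
    rw [fromBlocks_multiply]
    simp
  have step6 : (fromBlocks (0 : Matrix (Fin q) (Fin q) ℝ) (-X) 1 (1 + Y)).det = X.det := by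
    have h1 : (fromBlocks (1 : Matrix (Fin q) (Fin q) ℝ) (1 : Matrix (Fin q) (Fin q) ℝ)
        (0 : Matrix (Fin q) (Fin q) ℝ) (1 : Matrix (Fin q) (Fin q) ℝ)).det = 1 := by
      rw [det_fromBlocks_zero₂₁]; simp
    have := congrArg Matrix.det hmul
    rw [det_mul, h1, one_mul] at this
    rw [this, det_fromBlocks_one₁₁]
    congr 1
    simp
  calc (B - B * D * A⁻¹ * Dᵀ * B + G * D * E⁻¹ * Dᵀ * G).det
      = (B * (1 + B⁻¹ * (U * V))).det := by rw [step1, step2]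
    _ = B.det * (1 + V * (B⁻¹ * U)).det := by
        rw [det_mul, ← Matrix.mul_assoc, Matrix.det_one_add_mul_comm]
    _ = B.det * X.det := by rw [step4, step5, step6]
    _ = B.det * E.det / A.det := by
        rw [hXdef, det_mul, det_nonsing_inv, Ring.inverse_eq_inv']
        field_simp
end

section
/- Let $B \in \mathbb{R}^{n\times n}$ be symmetric positive definite, $D \in \mathbb{R}^{n\times q}$ with orthonormal columns ($D^TD = I_q$). Define $\tilde{B} = B - BD(D^TBD)^{-1}D^TB + DD^T$ and the projections $P = B^{1/2}D(D^TBD)^{-1}D^TB^{1/2}$, $P_B = BD(D^TB^2D)^{-1}D^TB$. Then $\|B - I\|_F^2 - \|\tilde{B} - I\|_F^2 = \|P_B - B^{1/2}PB^{1/2}\|_F^2 + 2\operatorname{Tr}(B(B^{1/2}PB^{1/2}) - (B^{1/2}PB^{1/2})^2)$. In particular $\|\tilde{B} - I\|_F \leq \|B - I\|_F$. -/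
open Matrix

private lemma tr_tmul_nonneg {m k : ℕ} (M : Matrix (Fin m) (Fin k) ℝ) :
    0 ≤ Matrix.trace (Mᵀ * M) := by
  classical
  simp only [Matrix.trace, Matrix.diag, Matrix.mul_apply, Matrix.transpose_apply]
  exact Finset.sum_nonneg fun i _ => Finset.sum_nonneg fun j _ => mul_self_nonneg _

private lemma posdef_conj {n q : ℕ} {M : Matrix (Fin n) (Fin n) ℝ} (hM : M.PosDef)
    {D : Matrix (Fin n) (Fin q) ℝ} (hD : Dᵀ * D = 1) : (Dᵀ * M * D).PosDef := by
  have hMt : Mᵀ = M := by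
    have := hM.isHermitian
    rwa [Matrix.IsHermitian, Matrix.conjTranspose_eq_transpose_of_trivial] at this
  refine posDef_iff_dotProduct_mulVec.mpr ⟨?_, ?_⟩
  · rw [Matrix.IsHermitian, Matrix.conjTranspose_eq_transpose_of_trivial]
    simp [Matrix.transpose_mul, hMt, Matrix.mul_assoc]
  · intro x hx
    have hDx : D *ᵥ x ≠ 0 := by
      intro h
      apply hx
      have h2 : (Dᵀ * D) *ᵥ x = x := by rw [hD, Matrix.one_mulVec]
      rw [← Matrix.mulVec_mulVec, h, Matrix.mulVec_zero] at h2
      exact h2.symm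
    have key : star x ⬝ᵥ (Dᵀ * M * D) *ᵥ x = star (D *ᵥ x) ⬝ᵥ M *ᵥ (D *ᵥ x) := by
      simp only [star_trivial, ← Matrix.mulVec_mulVec, Matrix.dotProduct_mulVec,
        Matrix.vecMul_transpose]
    rw [key]
    exact hM.dotProduct_mulVec_pos hDx

private lemma bb_posdef {n : ℕ} {B : Matrix (Fin n) (Fin n) ℝ} (hB : B.PosDef) :
    (B * B).PosDef := by
  have hMt : Bᵀ = B := by
    have := hB.isHermitian
    rwa [Matrix.IsHermitian, Matrix.conjTranspose_eq_transpose_of_trivial] at this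
  refine posDef_iff_dotProduct_mulVec.mpr ⟨?_, ?_⟩
  · rw [Matrix.IsHermitian, Matrix.conjTranspose_eq_transpose_of_trivial]
    simp [Matrix.transpose_mul, hMt]
  · intro x hx
    have hBx : B *ᵥ x ≠ 0 := by
      intro h
      have := hB.dotProduct_mulVec_pos hx
      rw [h] at this
      simp at this
    have key : star x ⬝ᵥ (B * B) *ᵥ x = (B *ᵥ x) ⬝ᵥ (B *ᵥ x) :=
      calc star x ⬝ᵥ (B * B) *ᵥ x = x ⬝ᵥ (B *ᵥ (B *ᵥ x)) := by
            rw [star_trivial, ← Matrix.mulVec_mulVec]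
        _ = (x ᵥ* B) ⬝ᵥ (B *ᵥ x) := Matrix.dotProduct_mulVec _ _ _
        _ = (B *ᵥ x) ⬝ᵥ (B *ᵥ x) := by
            conv_lhs => rw [← hMt]
            rw [Matrix.vecMul_transpose, hMt]
    rw [key]
    have h0 : (B *ᵥ x) ⬝ᵥ (B *ᵥ x) ≠ 0 := fun h => hBx (dotProduct_self_eq_zero.mp h)
    have h1 : 0 ≤ (B *ᵥ x) ⬝ᵥ (B *ᵥ x) := by
      simp only [dotProduct]
      exact Finset.sum_nonneg fun i _ => mul_self_nonneg _
    exact lt_of_le_of_ne h1 (Ne.symm h0)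

theorem stmt_16 {n q : ℕ} (B : Matrix (Fin n) (Fin n) ℝ) (hB : B.PosDef)
    (D : Matrix (Fin n) (Fin q) ℝ) (hD : Dᵀ * D = 1)
    (R P PB Bt : Matrix (Fin n) (Fin n) ℝ)
    (hR : R = (hB.posSemidef.1.eigenvectorUnitary : Matrix (Fin n) (Fin n) ℝ) *
      diagonal (Real.sqrt ∘ hB.posSemidef.1.eigenvalues) *
      (star hB.posSemidef.1.eigenvectorUnitary : Matrix (Fin n) (Fin n) ℝ))
    (hBt : Bt = B - B * D * (Dᵀ * B * D)⁻¹ * Dᵀ * B + D * Dᵀ)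
    (hP : P = R * D * (Dᵀ * B * D)⁻¹ * Dᵀ * R)
    (hPB : PB = B * D * (Dᵀ * B * B * D)⁻¹ * Dᵀ * B) :
    (Matrix.trace ((B - 1)ᵀ * (B - 1)) - Matrix.trace ((Bt - 1)ᵀ * (Bt - 1))
        = Matrix.trace ((PB - R * P * R)ᵀ * (PB - R * P * R))
          + 2 * Matrix.trace (B * (R * P * R) - (R * P * R) * (R * P * R))) ∧
      Real.sqrt (Matrix.trace ((Bt - 1)ᵀ * (Bt - 1)))
        ≤ Real.sqrt (Matrix.trace ((B - 1)ᵀ * (B - 1))) := by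
  classical
  have hBsymm : Bᵀ = B := by
    have := hB.isHermitian
    rwa [Matrix.IsHermitian, Matrix.conjTranspose_eq_transpose_of_trivial] at this
  have hU : (star hB.posSemidef.1.eigenvectorUnitary : Matrix (Fin n) (Fin n) ℝ) *
      (hB.posSemidef.1.eigenvectorUnitary : Matrix (Fin n) (Fin n) ℝ) = 1 :=
    Unitary.coe_star_mul_self _
  have hd : diagonal (Real.sqrt ∘ hB.posSemidef.1.eigenvalues) *
      diagonal (Real.sqrt ∘ hB.posSemidef.1.eigenvalues) = diagonal hB.posSemidef.1.eigenvalues := by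
    rw [diagonal_mul_diagonal]; congr 1; funext i
    simp [Real.mul_self_sqrt (hB.posSemidef.eigenvalues_nonneg i)]
  have hs := hB.posSemidef.1.spectral_theorem
  rw [Unitary.conjStarAlgAut_apply, RCLike.ofReal_real_eq_id, Function.id_comp] at hs
  have hRR : R * R = B := by
    rw [hR]
    calc _ = (hB.posSemidef.1.eigenvectorUnitary : Matrix (Fin n) (Fin n) ℝ) *
          (diagonal (Real.sqrt ∘ hB.posSemidef.1.eigenvalues) *
          ((star hB.posSemidef.1.eigenvectorUnitary : Matrix (Fin n) (Fin n) ℝ) *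
            (hB.posSemidef.1.eigenvectorUnitary : Matrix (Fin n) (Fin n) ℝ)) *
          diagonal (Real.sqrt ∘ hB.posSemidef.1.eigenvalues)) *
          (star hB.posSemidef.1.eigenvectorUnitary : Matrix (Fin n) (Fin n) ℝ) := by
            simp only [Matrix.mul_assoc]
      _ = B := by rw [hU, Matrix.mul_one, hd]; exact hs.symm
  have hRsymm : Rᵀ = R := by
    rw [hR]
    simp [Matrix.transpose_mul, Matrix.star_eq_conjTranspose,
      Matrix.conjTranspose_eq_transpose_of_trivial, Matrix.mul_assoc]
  -- invertibility facts
  have hM1pd : (Dᵀ * B * D).PosDef := posdef_conj hB hD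
  have hM2pd : (Dᵀ * B * B * D).PosDef := by
    have h := posdef_conj (bb_posdef hB) hD
    rwa [show Dᵀ * (B * B) * D = Dᵀ * B * B * D from by rw [Matrix.mul_assoc Dᵀ B B]] at h
  have h1 : (Dᵀ * B * D) * (Dᵀ * B * D)⁻¹ = 1 :=
    Matrix.mul_nonsing_inv _ ((Matrix.isUnit_iff_isUnit_det _).mp hM1pd.isUnit)
  have h1' : (Dᵀ * B * D)⁻¹ * (Dᵀ * B * D) = 1 :=
    Matrix.nonsing_inv_mul _ ((Matrix.isUnit_iff_isUnit_det _).mp hM1pd.isUnit)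
  have h2 : (Dᵀ * B * B * D) * (Dᵀ * B * B * D)⁻¹ = 1 :=
    Matrix.mul_nonsing_inv _ ((Matrix.isUnit_iff_isUnit_det _).mp hM2pd.isUnit)
  have h2' : (Dᵀ * B * B * D)⁻¹ * (Dᵀ * B * B * D) = 1 :=
    Matrix.nonsing_inv_mul _ ((Matrix.isUnit_iff_isUnit_det _).mp hM2pd.isUnit)
  -- cancellation simp lemmas, stated in right-associated normal form
  have c3 : ∀ (m : ℕ) (X : Matrix (Fin q) (Fin m) ℝ), Dᵀ * (D * X) = X := by
    intro m X
    rw [← Matrix.mul_assoc, hD, Matrix.one_mul]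
  have c1 : ∀ (m : ℕ) (X : Matrix (Fin q) (Fin m) ℝ),
      (Dᵀ * (B * D))⁻¹ * (Dᵀ * (B * (D * X))) = X := by
    intro m X
    calc (Dᵀ * (B * D))⁻¹ * (Dᵀ * (B * (D * X)))
        = ((Dᵀ * B * D)⁻¹ * (Dᵀ * B * D)) * X := by simp only [Matrix.mul_assoc]
      _ = X := by rw [h1', Matrix.one_mul]
  have c5 : ∀ (m : ℕ) (X : Matrix (Fin q) (Fin m) ℝ),
      Dᵀ * (B * (D * ((Dᵀ * (B * D))⁻¹ * X))) = X := by
    intro m X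
    calc Dᵀ * (B * (D * ((Dᵀ * (B * D))⁻¹ * X)))
        = ((Dᵀ * B * D) * (Dᵀ * B * D)⁻¹) * X := by simp only [Matrix.mul_assoc]
      _ = X := by rw [h1, Matrix.one_mul]
  have c2 : ∀ (m : ℕ) (X : Matrix (Fin q) (Fin m) ℝ),
      (Dᵀ * (B * (B * D)))⁻¹ * (Dᵀ * (B * (B * (D * X)))) = X := by
    intro m X
    calc (Dᵀ * (B * (B * D)))⁻¹ * (Dᵀ * (B * (B * (D * X))))
        = ((Dᵀ * B * B * D)⁻¹ * (Dᵀ * B * B * D)) * X := by simp only [Matrix.mul_assoc]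
      _ = X := by rw [h2', Matrix.one_mul]
  have c4 : ∀ (m : ℕ) (X : Matrix (Fin q) (Fin m) ℝ),
      Dᵀ * (B * (B * (D * ((Dᵀ * (B * (B * D)))⁻¹ * X)))) = X := by
    intro m X
    calc Dᵀ * (B * (B * (D * ((Dᵀ * (B * (B * D)))⁻¹ * X))))
        = ((Dᵀ * B * B * D) * (Dᵀ * B * B * D)⁻¹) * X := by simp only [Matrix.mul_assoc]
      _ = X := by rw [h2, Matrix.one_mul]
  have cR : ∀ (X : Matrix (Fin n) (Fin n) ℝ), R * (R * X) = B * X := by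
    intro X; rw [← Matrix.mul_assoc, hRR]
  have cRB : ∀ (X : Matrix (Fin n) (Fin n) ℝ), R * (B * X) = B * (R * X) := by
    intro X; rw [← hRR, Matrix.mul_assoc R R X, Matrix.mul_assoc R R (R * X)]
  obtain ⟨S, hSdef⟩ : ∃ S, S = B * D * (Dᵀ * B * D)⁻¹ * Dᵀ * B := ⟨_, rfl⟩
  obtain ⟨Q, hQdef⟩ : ∃ Q, Q = D * Dᵀ := ⟨_, rfl⟩
  have hRPR : R * P * R = S := by
    rw [hP, hSdef]; simp only [Matrix.mul_assoc, cR, hRR]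
  have hBtS : Bt = B - S + Q := by rw [hBt, ← hSdef, ← hQdef]
  have hSt : Sᵀ = S := by
    rw [hSdef]
    simp [Matrix.transpose_mul, Matrix.transpose_nonsing_inv, hBsymm, Matrix.mul_assoc]
  have hQt : Qᵀ = Q := by rw [hQdef]; simp
  have hPBt : PBᵀ = PB := by
    rw [hPB]
    simp [Matrix.transpose_mul, Matrix.transpose_nonsing_inv, hBsymm, Matrix.mul_assoc]
  have hPt : Pᵀ = P := by
    rw [hP]
    simp [Matrix.transpose_mul, Matrix.transpose_nonsing_inv, hBsymm, hRsymm, Matrix.mul_assoc]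
  have hSQ : S * Q = B * Q := by
    rw [hSdef, hQdef]; simp only [Matrix.mul_assoc, c1]
  have hQS : Q * S = Q * B := by
    rw [hSdef, hQdef]; simp only [Matrix.mul_assoc, c5]
  have hPBS : PB * S = S := by
    rw [hPB, hSdef]; simp only [Matrix.mul_assoc, c2]
  have hSPB : S * PB = S := by
    rw [hPB, hSdef]; simp only [Matrix.mul_assoc, c4]
  have hPB2 : PB * PB = PB := by
    rw [hPB]; simp only [Matrix.mul_assoc, c4]
  have hQQ : Q * Q = Q := by
    rw [hQdef]; simp only [Matrix.mul_assoc, c3]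
  have hPP : P * P = P := by
    rw [hP]; simp only [Matrix.mul_assoc, cR, hRR, c5]
  have hPP' : ∀ (X : Matrix (Fin n) (Fin n) ℝ), P * (P * X) = P * X := by
    intro X; rw [← Matrix.mul_assoc, hPP]
  have hTrPBQ : Matrix.trace PB = Matrix.trace Q := by
    rw [hPB, hQdef]
    rw [show B * D * (Dᵀ * B * B * D)⁻¹ * Dᵀ * B
        = (B * D * (Dᵀ * B * B * D)⁻¹) * (Dᵀ * B) from by rw [Matrix.mul_assoc]]
    rw [Matrix.trace_mul_comm, show (Dᵀ * B) * (B * D * (Dᵀ * B * B * D)⁻¹)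
        = (Dᵀ * B * B * D) * (Dᵀ * B * B * D)⁻¹ from by simp only [Matrix.mul_assoc], h2]
    rw [Matrix.trace_mul_comm D Dᵀ, hD]
  have eq1 : Matrix.trace ((B - 1)ᵀ * (B - 1)) - Matrix.trace ((Bt - 1)ᵀ * (Bt - 1))
      = Matrix.trace ((PB - R * P * R)ᵀ * (PB - R * P * R))
        + 2 * Matrix.trace (B * (R * P * R) - (R * P * R) * (R * P * R)) := by
    rw [hRPR, hBtS]
    have eSB : Matrix.trace (S * B) = Matrix.trace (B * S) := Matrix.trace_mul_comm _ _
    have eQB : Matrix.trace (Q * B) = Matrix.trace (B * Q) := Matrix.trace_mul_comm _ _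
    simp only [Matrix.transpose_sub, Matrix.transpose_add, Matrix.transpose_one, hBsymm,
      hSt, hQt, hPBt, sub_mul, mul_sub, add_mul, mul_add, mul_one, one_mul,
      Matrix.trace_sub, Matrix.trace_add, hSQ, hQS, hPBS, hSPB, hPB2, hQQ, hTrPBQ, eSB, eQB]
    ring
  have t1 : Matrix.trace (B * S) = Matrix.trace (B * (B * P)) := by
    rw [show B * S = (B * (R * P)) * R from by rw [← hRPR]; simp only [Matrix.mul_assoc],
      Matrix.trace_mul_comm]
    congr 1
    simp only [Matrix.mul_assoc, cRB, cR]
  have t2 : Matrix.trace (S * S) = Matrix.trace (B * (P * (B * P))) := by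
    rw [show S * S = (R * (P * (B * P))) * R from by
        rw [← hRPR]; simp only [Matrix.mul_assoc, cR],
      Matrix.trace_mul_comm]
    congr 1
    simp only [Matrix.mul_assoc, cR]
  have T1 : Matrix.trace ((P * B) * (B * P)) = Matrix.trace (B * (B * P)) := by
    rw [show (P * B) * (B * P) = P * (B * (B * P)) from by simp only [Matrix.mul_assoc],
      Matrix.trace_mul_comm]
    congr 1
    simp only [Matrix.mul_assoc, hPP]
  have T2 : Matrix.trace ((P * B) * (P * (B * P))) = Matrix.trace (B * (P * (B * P))) := by
    rw [show (P * B) * (P * (B * P)) = P * (B * (P * (B * P))) from by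
        simp only [Matrix.mul_assoc],
      Matrix.trace_mul_comm]
    congr 1
    simp only [Matrix.mul_assoc, hPP]
  have T3 : Matrix.trace (((P * B) * P) * (B * P)) = Matrix.trace (B * (P * (B * P))) := by
    rw [show ((P * B) * P) * (B * P) = P * (B * (P * (B * P))) from by
        simp only [Matrix.mul_assoc],
      Matrix.trace_mul_comm]
    congr 1
    simp only [Matrix.mul_assoc, hPP]
  have T4 : Matrix.trace (((P * B) * P) * (P * (B * P))) = Matrix.trace (B * (P * (B * P))) := by
    rw [show ((P * B) * P) * (P * (B * P)) = P * (B * (P * (B * P))) from by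
        simp only [Matrix.mul_assoc, hPP'],
      Matrix.trace_mul_comm]
    congr 1
    simp only [Matrix.mul_assoc, hPP]
  have pos2 : 0 ≤ Matrix.trace (B * S - S * S) := by
    have e : Matrix.trace (B * S - S * S)
        = Matrix.trace ((B * P - P * (B * P))ᵀ * (B * P - P * (B * P))) := by
      simp only [Matrix.transpose_sub, Matrix.transpose_mul, hPt, hBsymm, sub_mul, mul_sub,
        Matrix.trace_sub]
      rw [t1, t2, T1, T2, T3, T4]
      ring
    rw [e]; exact tr_tmul_nonneg _
  refine ⟨eq1, ?_⟩
  have nn1 : 0 ≤ Matrix.trace ((PB - R * P * R)ᵀ * (PB - R * P * R)) := tr_tmul_nonneg _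
  have nn2 : 0 ≤ Matrix.trace (B * (R * P * R) - (R * P * R) * (R * P * R)) := by
    rw [hRPR]; exact pos2
  exact Real.sqrt_le_sqrt (by linarith)
end

section
/- Let $B \in \mathbb{R}^{n\times n}$ be symmetric positive definite and let $v_1, \ldots, v_q$ be nonzero $B$-conjugate vectors with $D = [v_1 \cdots v_q]$. Then $\operatorname{Tr}((I_q - D^TB^2D(D^TBD)^{-1})^2) = \sum_{i=1}^q \left(1 - \frac{v_i^TB^2v_i}{v_i^TBv_i}\right)^2 + \sum_{i=1}^q\sum_{j\neq i} \frac{(v_i^TB^2v_j)^2}{(v_i^TBv_i)(v_j^TBv_j)}$. In particular, for each $i$, $\left(1 - \frac{v_i^TB^2v_i}{v_i^TBv_i}\right)^2 \leq \operatorname{Tr}((I_q - D^TB^2D(D^TBD)^{-1})^2)$. -/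
open Matrix

theorem stmt_17 {n q : ℕ} (B : Matrix (Fin n) (Fin n) ℝ) (hB : B.PosDef)
    (v : Fin q → Fin n → ℝ) (hv : ∀ i, v i ≠ 0)
    (hconj : ∀ i j, i ≠ j → v i ⬝ᵥ B.mulVec (v j) = 0)
    (D : Matrix (Fin n) (Fin q) ℝ) (hD : D = Matrix.of fun i j => v j i) :
    Matrix.trace ((1 - Dᵀ * B * B * D * (Dᵀ * B * D)⁻¹)
          * (1 - Dᵀ * B * B * D * (Dᵀ * B * D)⁻¹))
        = ∑ i, (1 - (v i ⬝ᵥ (B * B).mulVec (v i)) / (v i ⬝ᵥ B.mulVec (v i))) ^ 2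
          + ∑ i, ∑ j ∈ Finset.univ.erase i,
              (v i ⬝ᵥ (B * B).mulVec (v j)) ^ 2
                / ((v i ⬝ᵥ B.mulVec (v i)) * (v j ⬝ᵥ B.mulVec (v j))) ∧
      ∀ i, (1 - (v i ⬝ᵥ (B * B).mulVec (v i)) / (v i ⬝ᵥ B.mulVec (v i))) ^ 2
        ≤ Matrix.trace ((1 - Dᵀ * B * B * D * (Dᵀ * B * D)⁻¹)
            * (1 - Dᵀ * B * B * D * (Dᵀ * B * D)⁻¹)) := by
  set d : Fin q → ℝ := fun i => v i ⬝ᵥ B.mulVec (v i) with hd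
  have hdpos : ∀ i, 0 < d i := by
    intro i
    have := hB.dotProduct_mulVec_pos (hv i)
    simpa [hd] using this
  have hdne : ∀ i, d i ≠ 0 := fun i => (hdpos i).ne'
  have hentry : ∀ (X : Matrix (Fin n) (Fin n) ℝ) (i j : Fin q),
      (Dᵀ * X * D) i j = v i ⬝ᵥ X.mulVec (v j) := by
    intro X i j
    subst hD
    simp only [mul_apply, mulVec, dotProduct, transpose_apply, of_apply,
      Finset.mul_sum, Finset.sum_mul]
    rw [Finset.sum_comm]
    apply Finset.sum_congr rfl; intro a _; apply Finset.sum_congr rfl; intro b _; ring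
  have hM : Dᵀ * B * D = Matrix.diagonal d := by
    ext i j
    rw [hentry]
    by_cases h : i = j
    · subst h; simp [Matrix.diagonal_apply_eq, hd]
    · rw [Matrix.diagonal_apply_ne _ h]; exact hconj i j h
  have hinv : (Dᵀ * B * D)⁻¹ = Matrix.diagonal (fun i => (d i)⁻¹) := by
    rw [hM]
    apply Matrix.inv_eq_right_inv
    rw [Matrix.diagonal_mul_diagonal]
    ext i j
    by_cases h : i = j
    · subst h; simp [mul_inv_cancel₀ (hdne i)]
    · simp [Matrix.diagonal_apply_ne _ h, Matrix.one_apply_ne h]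
  have hBs : Bᵀ = B := by simpa using hB.1.eq
  set A : Fin q → Fin q → ℝ := fun i j => v i ⬝ᵥ (B * B).mulVec (v j) with hA
  have hA2 : ∀ i j, (Dᵀ * B * B * D) i j = A i j := by
    intro i j
    rw [show Dᵀ * B * B * D = Dᵀ * (B * B) * D by simp only [Matrix.mul_assoc]]
    exact hentry (B * B) i j
  have hBBs : (B * B)ᵀ = B * B := by rw [Matrix.transpose_mul, hBs]
  have hAsymm : ∀ i j, A i j = A j i := by
    intro i j
    simp only [hA]
    rw [Matrix.dotProduct_mulVec, ← Matrix.mulVec_transpose, hBBs, dotProduct_comm]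
  set E : Matrix (Fin q) (Fin q) ℝ := 1 - Dᵀ * B * B * D * (Dᵀ * B * D)⁻¹ with hE
  have hEapp : ∀ i j, E i j = (if i = j then 1 else 0) - A i j * (d j)⁻¹ := by
    intro i j
    simp only [hE, hinv, Matrix.sub_apply, Matrix.one_apply]
    congr 1
    rw [Matrix.mul_apply]
    rw [Finset.sum_eq_single j]
    · rw [hA2, Matrix.diagonal_apply_eq]
    · intro b _ hb; rw [Matrix.diagonal_apply_ne _ hb, mul_zero]
    · intro h; exact absurd (Finset.mem_univ j) h
  have htr : Matrix.trace (E * E) = ∑ i, (1 - A i i / d i) ^ 2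
      + ∑ i, ∑ j ∈ Finset.univ.erase i, A i j ^ 2 / (d i * d j) := by
    rw [Matrix.trace]
    simp only [Matrix.diag_apply, Matrix.mul_apply]
    have : ∀ i : Fin q, ∑ j, E i j * E j i
        = (1 - A i i / d i) ^ 2 + ∑ j ∈ Finset.univ.erase i, A i j ^ 2 / (d i * d j) := by
      intro i
      rw [← Finset.add_sum_erase _ _ (Finset.mem_univ i)]
      congr 1
      · rw [hEapp, if_pos rfl, div_eq_mul_inv]
        ring
      · apply Finset.sum_congr rfl
        intro j hj
        have hji : j ≠ i := Finset.ne_of_mem_erase hj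
        rw [hEapp, hEapp, if_neg (Ne.symm hji), if_neg hji, hAsymm j i]
        field_simp
        ring
    rw [Finset.sum_congr rfl fun i _ => this i, Finset.sum_add_distrib]
  constructor
  · exact htr
  · intro i
    rw [htr]
    have h1 : (1 - A i i / d i) ^ 2 ≤ ∑ k, (1 - A k k / d k) ^ 2 := by
      apply Finset.single_le_sum (fun k _ => sq_nonneg _) (Finset.mem_univ i)
    have h2 : 0 ≤ ∑ k, ∑ j ∈ Finset.univ.erase k, A k j ^ 2 / (d k * d j) := by
      apply Finset.sum_nonneg; intro k _
      apply Finset.sum_nonneg; intro j _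
      exact div_nonneg (sq_nonneg _) (le_of_lt (mul_pos (hdpos k) (hdpos j)))
    linarith
end
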